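/- (Lemma A.1) Let X be a nonempty compact topological space and let f, g : X → ℝ be continuous functions with f(x) < g(x) for every x ∈ X. Then for every sequence (x_t)_{t ∈ ℕ} in X satisfying f(x_t) = g(x_{t+1}) for all t, there exists a finite index T with f(x_T) < 0. -/
import Mathlib

/-- Lemma A.1: on a nonempty compact space, if `f < g` pointwise for continuous `f, g`,
then any sequence with `f (x t) = g (x (t+1))` eventually takes `f` below zero. -/
theorem seq_cutoff_below_zero (X : Type*) [TopologicalSpace X] [CompactSpace X]
    [Nonempty X] (f g : X → ℝ) (hf : Continuous f) (hg : Continuous g)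
    (hfg : ∀ x, f x < g x) (x : ℕ → X) (hx : ∀ t, f (x t) = g (x (t + 1))) :
    ∃ T : ℕ, f (x T) < 0 := by
  obtain ⟨z, _, hz⟩ := isCompact_univ.exists_isMinOn Set.univ_nonempty
    ((hg.sub hf).continuousOn)
  set ε : ℝ := g z - f z with hε
  have hεpos : 0 < ε := sub_pos.mpr (hfg z)
  have key : ∀ t, f (x t) ≤ f (x 0) - t * ε := by
    intro t
    induction t with
    | zero => simp
    | succ n ih =>
      have h1 : ε ≤ g (x (n+1)) - f (x (n+1)) := hz (Set.mem_univ _)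
      have h2 : f (x (n+1)) ≤ g (x (n+1)) - ε := by linarith
      rw [← hx n] at h2
      push_cast
      linarith
  obtain ⟨T, hT⟩ := Archimedean.arch (f (x 0)) hεpos
  refine ⟨T + 1, lt_of_le_of_lt (key (T+1)) ?_⟩
  have : (T : ℝ) * ε ≤ (T+1 : ℕ) * ε - ε := by push_cast; ring_nf; linarith
  have := hT.trans (by simpa [nsmul_eq_mul] using this)
  linarith
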